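/- Let κ' ∈ (0,1), let f ∈ ℝ^E be a strictly feasible circulation with cᵀf > F, let g̃ ∈ ℝ^E satisfy ‖L(f)^{−1}(g̃ − g(f))‖_∞ ≤ κ'/8, and let ℓ̃ ∈ ℝ^E with ℓ̃ > 0 satisfy ℓ̃ ≈₂ ℓ(f), with L̃ = diag(ℓ̃). Let Δ ∈ ℝ^E be a nonzero circulation with g̃ᵀΔ / ‖L̃Δ‖₁ ≤ −κ', and let η ∈ ℝ satisfy η·g̃ᵀΔ = −κ'²/50. Then f + ηΔ is strictly feasible, cᵀ(f + ηΔ) > F, and Φ(f + ηΔ) ≤ Φ(f) − κ'²/500. -/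

import Mathlib

private lemma bern {x α : ℝ} (hx : 0 ≤ x) (h0 : 0 ≤ α) (h1 : α ≤ 1) :
    x ^ α ≤ 1 + α * (x - 1) := by
  have h := Real.geom_mean_le_arith_mean2_weighted (by linarith : (0:ℝ) ≤ 1 - α) h0
    zero_le_one hx (by ring)
  rw [Real.one_rpow, one_mul] at h
  linarith

private lemma scalar_key {α s : ℝ} (h0 : 0 ≤ α) (h1 : α ≤ 1) (hs : |s| ≤ 1/2) :
    (1 - s) ^ (-α) ≤ 1 + α * s + 2 * α * s ^ 2 := by
  obtain ⟨hs1, hs2⟩ := abs_le.1 hs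
  have h1s : (0:ℝ) < 1 - s := by linarith
  have hx : (0:ℝ) ≤ (1 - s)⁻¹ := by positivity
  have key : (1 - s)⁻¹ - 1 ≤ s + 2 * s ^ 2 := by
    rw [sub_le_iff_le_add, inv_eq_one_div, div_le_iff₀ h1s]
    nlinarith
  have e1 : (1 - s) ^ (-α) = ((1 - s)⁻¹) ^ α := by
    rw [Real.rpow_neg h1s.le, ← Real.inv_rpow h1s.le]
  rw [e1]
  have := bern hx h0 h1
  nlinarith [mul_le_mul_of_nonneg_left key h0]

private lemma barrier_step {a h α : ℝ} (ha : 0 < a) (hh : |h| ≤ a / 2)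
    (h0 : 0 ≤ α) (h1 : α ≤ 1) :
    (a - h) ^ (-α) ≤ a ^ (-α) + α * a ^ (-1 - α) * h + 2 * α * a ^ (-1 - α) * h ^ 2 / a := by
  set s : ℝ := h / a with hsdef
  have hs : |s| ≤ 1 / 2 := by
    rw [hsdef, abs_div, abs_of_pos ha, div_le_iff₀ ha]
    linarith
  have hs2 : (0:ℝ) ≤ 1 - s := by linarith [(abs_le.1 hs).2]
  have e1 : a - h = a * (1 - s) := by
    rw [hsdef]; field_simp
  have e2 : (a * (1 - s)) ^ (-α) = a ^ (-α) * (1 - s) ^ (-α) :=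
    Real.mul_rpow ha.le hs2
  have e3 : a ^ (-1 - α) = a ^ (-α) / a := by
    rw [show (-1 - α) = -α - 1 by ring, Real.rpow_sub ha, Real.rpow_one]
  have hpos : (0:ℝ) < a ^ (-α) := Real.rpow_pos_of_pos ha _
  have key := scalar_key h0 h1 hs
  have hmul := mul_le_mul_of_nonneg_left key hpos.le
  rw [e1, e2, e3]
  have ha' : a ≠ 0 := ha.ne'
  calc a ^ (-α) * (1 - s) ^ (-α) ≤ a ^ (-α) * (1 + α * s + 2 * α * s ^ 2) := hmul
    _ = a ^ (-α) + α * (a ^ (-α) / a) * h + 2 * α * (a ^ (-α) / a) * h ^ 2 / a := by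
        rw [hsdef]; field_simp

/-- A vector `f ∈ ℝ^E` is a circulation in the directed multigraph given by
`tail, head : E → V` if at every vertex the inflow equals the outflow. -/
def IsCirculation {V E : Type*} [Fintype E] [DecidableEq V]
    (tail head : E → V) (f : E → ℝ) : Prop :=
  ∀ v : V, (∑ e : E, if head e = v then f e else 0) = ∑ e : E, if tail e = v then f e else 0

set_option maxHeartbeats 2000000

/-- Augmenting along a circulation `Δ` of ratio at most `−κ'` with step size `η`
satisfying `η·g̃ᵀΔ = −κ'²/50` keeps the flow strictly feasible with `cᵀ(f+ηΔ) > F`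
and decreases the potential by at least `κ'²/500`. -/
theorem stmt4 {V E : Type*} [Fintype V] [Fintype E] [DecidableEq V]
    (tail head : E → V)
    (m C U : ℤ) (hm1 : 1 ≤ m) (hC1 : 1 ≤ C) (hU1 : 1 ≤ U)
    (hmE : (Fintype.card E : ℤ) ≤ m) (hmCU : 2 ≤ m * C * U)
    (c : E → ℤ) (hc : ∀ e, |c e| ≤ C)
    (u : E → ℤ) (hu : ∀ e, 1 ≤ u e ∧ u e ≤ U)
    (F : ℤ) (α δ : ℝ)
    (hα : α = 1 / (5000 * Real.log ((m * C * U : ℤ) : ℝ)))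
    (hδ : δ = 1 / (20 * (m : ℝ) ^ 2 * (C : ℝ)))
    (κ' : ℝ) (hκ'0 : 0 < κ') (hκ'1 : κ' < 1)
    -- `f` is a strictly feasible circulation with `cᵀf > F`
    (f : E → ℝ) (hcirc : IsCirculation tail head f)
    (hfeas : ∀ e, -δ < f e ∧ f e < (u e : ℝ))
    (hcost : (F : ℝ) < ∑ e : E, (c e : ℝ) * f e)
    -- lengths `ℓ(f)` and gradient `g(f)`
    (ℓf gf : E → ℝ)
    (hℓf : ∀ e, ℓf e = ((u e : ℝ) - f e) ^ (-1 - α) + (f e + δ) ^ (-1 - α))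
    (hgf : ∀ e, gf e = 20 * (m : ℝ) * ((∑ e' : E, (c e' : ℝ) * f e') - (F : ℝ))⁻¹ * (c e : ℝ)
        + α * ((u e : ℝ) - f e) ^ (-1 - α) - α * (f e + δ) ^ (-1 - α))
    -- approximate gradient `g̃` and lengths `ℓ̃`
    (gt : E → ℝ) (hgt : ∀ e, |(ℓf e)⁻¹ * (gt e - gf e)| ≤ κ' / 8)
    (lt : E → ℝ) (hltpos : ∀ e, 0 < lt e)
    (hlt : ∀ e, lt e / 2 ≤ ℓf e ∧ ℓf e ≤ 2 * lt e)
    -- the augmenting circulation `Δ` and the step size `η`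
    (Δ : E → ℝ) (hΔcirc : IsCirculation tail head Δ) (hΔne : Δ ≠ 0)
    (hΔratio : (∑ e : E, gt e * Δ e) / (∑ e : E, lt e * |Δ e|) ≤ -κ')
    (η : ℝ) (hη : η * (∑ e : E, gt e * Δ e) = -κ' ^ 2 / 50) :
    (∀ e, -δ < f e + η * Δ e ∧ f e + η * Δ e < (u e : ℝ))
    ∧ (F : ℝ) < ∑ e : E, (c e : ℝ) * (f e + η * Δ e)
    ∧ 20 * (m : ℝ) * Real.log ((∑ e : E, (c e : ℝ) * (f e + η * Δ e)) - (F : ℝ))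
        + ∑ e : E, (((u e : ℝ) - (f e + η * Δ e)) ^ (-α) + ((f e + η * Δ e) + δ) ^ (-α))
      ≤ (20 * (m : ℝ) * Real.log ((∑ e : E, (c e : ℝ) * f e) - (F : ℝ))
        + ∑ e : E, (((u e : ℝ) - f e) ^ (-α) + (f e + δ) ^ (-α)))
        - κ' ^ 2 / 500 := by
  classical
  -- basic casts
  have hmR : (1:ℝ) ≤ (m:ℝ) := by exact_mod_cast hm1
  have hCR : (1:ℝ) ≤ (C:ℝ) := by exact_mod_cast hC1
  have hUR : (1:ℝ) ≤ (U:ℝ) := by exact_mod_cast hU1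
  have hmCUR : (2:ℝ) ≤ (m:ℝ) * (C:ℝ) * (U:ℝ) := by exact_mod_cast hmCU
  -- bounds on α
  set L : ℝ := Real.log (((m * C * U : ℤ) : ℝ)) with hLdef
  have hLcast : ((m * C * U : ℤ) : ℝ) = (m:ℝ) * (C:ℝ) * (U:ℝ) := by push_cast; ring
  have hL2 : Real.log 2 ≤ L := by
    rw [hLdef, hLcast]; exact Real.log_le_log two_pos hmCUR
  have hL69 : (0.6931471803 : ℝ) ≤ L := le_trans Real.log_two_gt_d9.le hL2
  have hLpos : 0 < L := by linarith
  have hαpos : 0 < α := by rw [hα]; positivity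
  have hα3000 : α ≤ 1/3000 := by
    rw [hα, div_le_div_iff₀ (by positivity) (by norm_num)]
    nlinarith
  have hα1 : α ≤ 1 := by linarith
  -- bounds on δ
  have hδpos : 0 < δ := by rw [hδ]; positivity
  have hδ1 : δ ≤ 1 := by
    rw [hδ, div_le_one (by positivity)]
    nlinarith
  -- edge slack quantities
  set a : E → ℝ := fun e => (u e : ℝ) - f e with ha_def
  set b : E → ℝ := fun e => f e + δ with hb_def
  have haeq : ∀ e, a e = (u e : ℝ) - f e := fun e => by rw [ha_def]
  have hbeq : ∀ e, b e = f e + δ := fun e => by rw [hb_def]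
  have hapos : ∀ e, 0 < a e := fun e => by rw [haeq]; exact sub_pos.2 (hfeas e).2
  have hbpos : ∀ e, 0 < b e := fun e => by
    rw [hbeq]; have := (hfeas e).1; linarith
  have huU : ∀ e, (u e : ℝ) ≤ (U:ℝ) := fun e => by exact_mod_cast (hu e).2
  have haU : ∀ e, a e ≤ (U:ℝ) + 1 := fun e => by
    rw [haeq]; have h1 := (hfeas e).1; have := huU e; linarith
  have hbU : ∀ e, b e ≤ (U:ℝ) + 1 := fun e => by
    rw [hbeq]; have h2 := (hfeas e).2; have := huU e; linarith
  -- x^α ≤ 2 for 0 < x ≤ U+1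
  have hpow2 : ∀ x : ℝ, 0 < x → x ≤ (U:ℝ) + 1 → x ^ α ≤ 2 := by
    intro x hx hxU
    rcases le_or_gt x 1 with h | h
    · exact (Real.rpow_le_one hx.le h hαpos.le).trans one_le_two
    · have h1 : x ^ α ≤ ((U:ℝ) + 1) ^ α := Real.rpow_le_rpow hx.le hxU hαpos.le
      have hU1' : (0:ℝ) < (U:ℝ) + 1 := by linarith
      have hlogU : Real.log ((U:ℝ) + 1) ≤ 2 * L := by
        have hMC : (1:ℝ) ≤ (m:ℝ) * (C:ℝ) := by
          have := mul_le_mul hmR hCR zero_le_one (by linarith : (0:ℝ) ≤ (m:ℝ))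
          linarith
        have hUP : (U:ℝ) ≤ (m:ℝ) * C * U := by
          have := mul_le_mul_of_nonneg_right hMC (by linarith : (0:ℝ) ≤ (U:ℝ))
          linarith
        have hle : (U:ℝ) + 1 ≤ ((m:ℝ) * C * U) * ((m:ℝ) * C * U) := by
          have h2P := mul_le_mul_of_nonneg_right hmCUR (by linarith : (0:ℝ) ≤ (m:ℝ)*C*U)
          linarith
        have hPne : ((m:ℝ) * C * U) ≠ 0 := by linarith
        have h2 := Real.log_le_log hU1' hle
        rw [Real.log_mul hPne hPne] at h2
        rw [hLdef, hLcast]; linarith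
      have hαL : α * Real.log ((U:ℝ) + 1) ≤ Real.log 2 := by
        have e1 : α * (2 * L) = 2/5000 := by
          rw [hα]
          field_simp
        have h2 : α * Real.log ((U:ℝ) + 1) ≤ α * (2 * L) :=
          mul_le_mul_of_nonneg_left hlogU hαpos.le
        have h3 : (2:ℝ)/5000 ≤ Real.log 2 := by
          have := Real.log_two_gt_d9; linarith
        rw [e1] at h2
        linarith
      have h2 : ((U:ℝ) + 1) ^ α = Real.exp (Real.log ((U:ℝ)+1) * α) :=
        Real.rpow_def_of_pos hU1' α
      have h3 : Real.exp (Real.log ((U:ℝ)+1) * α) ≤ Real.exp (Real.log 2) := by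
        apply Real.exp_le_exp.2; rw [mul_comm]; exact hαL
      rw [Real.exp_log two_pos] at h3
      rw [h2] at h1; linarith
  -- lengths
  have hℓeq : ∀ e, ℓf e = a e ^ (-1-α) + b e ^ (-1-α) := fun e => by
    simp only [hℓf e, haeq, hbeq]
  have hℓpos : ∀ e, 0 < ℓf e := fun e => by
    rw [hℓeq e]
    have := Real.rpow_pos_of_pos (hapos e) (-1-α)
    have := Real.rpow_pos_of_pos (hbpos e) (-1-α)
    linarith
  -- cost gap
  set S : ℝ := (∑ e : E, (c e : ℝ) * f e) - (F : ℝ) with hSdef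
  have hS : 0 < S := sub_pos.2 hcost
  -- step direction quantities
  set N : ℝ := ∑ e : E, lt e * |Δ e| with hNdef
  set Gt : ℝ := ∑ e : E, gt e * Δ e with hGtdef
  have hN : 0 < N := by
    obtain ⟨e₀, he₀⟩ := Function.ne_iff.1 hΔne
    refine Finset.sum_pos' (fun e _ => mul_nonneg (hltpos e).le (abs_nonneg _))
      ⟨e₀, Finset.mem_univ _, ?_⟩
    exact mul_pos (hltpos e₀) (abs_pos.2 he₀)
  have hGtN : Gt ≤ -κ' * N := (div_le_iff₀ hN).1 hΔratio
  have hGtneg : Gt < 0 := lt_of_le_of_lt hGtN (by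
    have := mul_pos hκ'0 hN; linarith)
  have hηpos : 0 < η := by
    by_contra hcon
    push_neg at hcon
    have h0 : 0 ≤ (-η) * (-Gt) := mul_nonneg (neg_nonneg.2 hcon) (neg_nonneg.2 hGtneg.le)
    have h1 : 0 ≤ η * Gt := by linarith [h0]
    have h2 : (0:ℝ) < κ'^2 := pow_pos hκ'0 2
    linarith [hη]
  have hηN : η * N ≤ κ' / 50 := by
    have h1 : η * Gt ≤ η * (-κ' * N) := mul_le_mul_of_nonneg_left hGtN hηpos.le
    rw [hη] at h1
    have h2 : κ' * (η * N) ≤ κ' * (κ' / 50) := by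
      have : κ' * (κ' / 50) = κ' ^ 2 / 50 := by ring
      linarith [h1, this]
    exact (mul_le_mul_iff_right₀ hκ'0).1 h2
  -- per-edge step bound: K := ∑ ℓf e * |η Δ e| ≤ κ'/25
  have habs : ∀ e, |η * Δ e| = η * |Δ e| := fun e => by
    rw [abs_mul, abs_of_pos hηpos]
  have hK : (∑ e : E, ℓf e * |η * Δ e|) ≤ κ' / 25 := by
    have h1 : (∑ e : E, ℓf e * |η * Δ e|) ≤ ∑ e : E, 2 * lt e * (η * |Δ e|) := by
      apply Finset.sum_le_sum
      intro e _
      rw [habs e]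
      exact mul_le_mul_of_nonneg_right (hlt e).2 (by positivity)
    have h2 : (∑ e : E, 2 * lt e * (η * |Δ e|)) = 2 * η * N := by
      rw [hNdef, Finset.mul_sum]
      exact Finset.sum_congr rfl fun e _ => by ring
    linarith
  have hKnn : ∀ e, 0 ≤ ℓf e * |η * Δ e| := fun e =>
    mul_nonneg (hℓpos e).le (abs_nonneg _)
  have hKe : ∀ e, ℓf e * |η * Δ e| ≤ κ' / 25 := fun e =>
    le_trans (Finset.single_le_sum (fun e _ => hKnn e) (Finset.mem_univ e)) hK
  -- per-edge component bounds
  have haK : ∀ e, a e ^ (-1-α) * |η * Δ e| ≤ κ' / 25 := by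
    intro e
    refine le_trans ?_ (hKe e)
    apply mul_le_mul_of_nonneg_right _ (abs_nonneg _)
    rw [hℓeq e]
    have := Real.rpow_pos_of_pos (hbpos e) (-1-α)
    linarith
  have hbK : ∀ e, b e ^ (-1-α) * |η * Δ e| ≤ κ' / 25 := by
    intro e
    refine le_trans ?_ (hKe e)
    apply mul_le_mul_of_nonneg_right _ (abs_nonneg _)
    rw [hℓeq e]
    have := Real.rpow_pos_of_pos (hapos e) (-1-α)
    linarith
  -- |η Δ e| ≤ a e / 2 and ≤ b e / 2
  have hstep : ∀ x y : ℝ, 0 < x → x ≤ (U:ℝ)+1 → 0 ≤ y → x ^ (-1-α) * y ≤ κ'/25 →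
      y ≤ x / 2 := by
    intro x y hx hxU hy hxy
    have e0 : x ^ ((1:ℝ)+α) * x ^ (-1-α) = 1 := by
      rw [← Real.rpow_add hx]; norm_num
    have e1 : x ^ ((1:ℝ)+α) = x * x ^ α := by
      rw [Real.rpow_add hx, Real.rpow_one]
    have e2 : x ^ α ≤ 2 := hpow2 x hx hxU
    have e4 : 0 ≤ x ^ (-1-α) * y := mul_nonneg (Real.rpow_pos_of_pos hx _).le hy
    have e6 : x ^ α * (x ^ (-1-α) * y) ≤ 2 * (κ'/25) :=
      mul_le_mul e2 hxy e4 (by norm_num)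
    have e5 : y = x * (x ^ α * (x ^ (-1-α) * y)) := by
      calc y = (x ^ ((1:ℝ)+α) * x ^ (-1-α)) * y := by rw [e0, one_mul]
        _ = x * (x ^ α * (x ^ (-1-α) * y)) := by rw [e1]; ring
    calc y = x * (x ^ α * (x ^ (-1-α) * y)) := e5
      _ ≤ x * (2 * (κ'/25)) := mul_le_mul_of_nonneg_left e6 hx.le
      _ ≤ x / 2 := by
          have h7 : x * (2 * (κ'/25)) ≤ x * (2 * ((1:ℝ)/25)) :=
            mul_le_mul_of_nonneg_left (by linarith) hx.le
          linarith
  have hha : ∀ e, |η * Δ e| ≤ a e / 2 := fun e =>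
    hstep _ _ (hapos e) (haU e) (abs_nonneg _) (haK e)
  have hhb : ∀ e, |η * Δ e| ≤ b e / 2 := fun e =>
    hstep _ _ (hbpos e) (hbU e) (abs_nonneg _) (hbK e)
  -- Conclusion 1: strict feasibility
  have feas : ∀ e, -δ < f e + η * Δ e ∧ f e + η * Δ e < (u e : ℝ) := by
    intro e
    obtain ⟨l1, l2⟩ := abs_le.1 (hha e)
    obtain ⟨l3, l4⟩ := abs_le.1 (hhb e)
    have h1 := hapos e
    have h2 := hbpos e
    rw [haeq] at l1 l2 h1
    rw [hbeq] at l3 l4 h2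
    constructor <;> [linarith; linarith]
  -- gradient error per edge
  have hge : ∀ e, |gt e - gf e| ≤ ℓf e * (κ'/8) := by
    intro e
    have h1 := hgt e
    rw [abs_mul, abs_inv, abs_of_pos (hℓpos e)] at h1
    exact (inv_mul_le_iff₀ (hℓpos e)).1 h1
  -- true gradient inner product
  set Gf : ℝ := ∑ e : E, gf e * Δ e with hGfdef
  have hGdiff : |η * Gf - η * Gt| ≤ κ'^2 / 200 := by
    have e1 : η * Gf - η * Gt = ∑ e : E, (gf e - gt e) * (η * Δ e) := by
      rw [hGfdef, hGtdef, Finset.mul_sum, Finset.mul_sum, ← Finset.sum_sub_distrib]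
      exact Finset.sum_congr rfl fun e _ => by ring
    rw [e1]
    refine le_trans (Finset.abs_sum_le_sum_abs _ _) ?_
    have e2 : ∀ e ∈ (Finset.univ : Finset E),
        |(gf e - gt e) * (η * Δ e)| ≤ (κ'/8) * (ℓf e * |η * Δ e|) := by
      intro e _
      rw [abs_mul, abs_sub_comm]
      have h3 := mul_le_mul_of_nonneg_right (hge e) (abs_nonneg (η * Δ e))
      refine h3.trans (le_of_eq (by ring))
    refine le_trans (Finset.sum_le_sum e2) ?_
    rw [← Finset.mul_sum]
    have h8 := mul_le_mul_of_nonneg_left hK (by positivity : (0:ℝ) ≤ κ'/8)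
    linarith
  have hηGf_ub : η * Gf ≤ -(3 * κ'^2) / 200 := by
    have d2 := (abs_le.1 hGdiff).2
    rw [hη] at d2
    linarith
  have hηGf_lb : -(κ'^2) / 40 ≤ η * Gf := by
    have d1 := (abs_le.1 hGdiff).1
    rw [hη] at d1
    linarith
  -- linear decomposition
  set T : ℝ := ∑ e : E, (c e : ℝ) * (η * Δ e) with hTdef
  set A : ℝ := ∑ e : E, (α * a e ^ (-1-α) - α * b e ^ (-1-α)) * (η * Δ e) with hAdef
  have hGfTA : η * Gf = 20 * (m:ℝ) * S⁻¹ * T + A := by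
    rw [hGfdef, hAdef, hTdef, Finset.mul_sum, Finset.mul_sum, ← Finset.sum_add_distrib]
    refine Finset.sum_congr rfl fun e _ => ?_
    rw [hgf e, haeq, hbeq]
    ring
  have hA : |A| ≤ α * (κ'/25) := by
    rw [hAdef]
    refine le_trans (Finset.abs_sum_le_sum_abs _ _) ?_
    have e2 : ∀ e ∈ (Finset.univ : Finset E),
        |(α * a e ^ (-1-α) - α * b e ^ (-1-α)) * (η * Δ e)| ≤ α * (ℓf e * |η * Δ e|) := by
      intro e _
      rw [abs_mul]
      have p1 : (0:ℝ) < a e ^ (-1-α) := Real.rpow_pos_of_pos (hapos e) _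
      have p2 : (0:ℝ) < b e ^ (-1-α) := Real.rpow_pos_of_pos (hbpos e) _
      have h1 : |α * a e ^ (-1-α) - α * b e ^ (-1-α)| ≤ α * ℓf e := by
        rw [hℓeq e, abs_le]
        have q1 : 0 ≤ α * (a e ^ (-1-α)) := mul_nonneg hαpos.le p1.le
        have q2 : 0 ≤ α * (b e ^ (-1-α)) := mul_nonneg hαpos.le p2.le
        constructor <;> [nlinarith [q1, q2]; nlinarith [q1, q2]]
      have h4 := mul_le_mul_of_nonneg_right h1 (abs_nonneg (η * Δ e))
      refine h4.trans (le_of_eq (by ring))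
    refine le_trans (Finset.sum_le_sum e2) ?_
    rw [← Finset.mul_sum]
    exact mul_le_mul_of_nonneg_left hK hαpos.le
  -- bound on the cost move
  have h20T : |20 * (m:ℝ) * S⁻¹ * T| ≤ 1/10 := by
    have e1 : 20 * (m:ℝ) * S⁻¹ * T = η * Gf - A := by rw [hGfTA]; ring
    rw [e1]
    have h1 : |η * Gf| ≤ κ'^2/40 := by
      rw [abs_le]
      constructor
      · linarith
      · nlinarith [sq_nonneg κ']
    have h3 : |η * Gf - A| ≤ |η * Gf| + |A| := abs_sub _ _
    have hκ2 : κ'^2 ≤ 1 := by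
      have h9 := mul_le_mul hκ'1.le hκ'1.le hκ'0.le zero_le_one
      have h10 : κ'^2 = κ' * κ' := sq κ'
      linarith
    have hακ : α * (κ'/25) ≤ 1/3000 := by
      have h9 : α * (κ'/25) ≤ α * 1 :=
        mul_le_mul_of_nonneg_left (by linarith) hαpos.le
      linarith
    linarith
  have hT2 : |T| ≤ S / 2 := by
    have hpos20 : (0:ℝ) < 20 * (m:ℝ) * S⁻¹ := by positivity
    have h1 : 20 * (m:ℝ) * S⁻¹ * |T| ≤ 1/10 := by
      rw [← abs_of_pos hpos20, ← abs_mul]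
      exact h20T
    have h4 : 20 * (m:ℝ) * |T| ≤ S/10 := by
      have h3 := mul_le_mul_of_nonneg_right h1 hS.le
      have e0 : 20 * (m:ℝ) * S⁻¹ * |T| * S = 20 * (m:ℝ) * |T| := by
        field_simp
      rw [e0] at h3
      linarith
    have h9 := mul_le_mul_of_nonneg_right hmR (abs_nonneg T)
    linarith
  have hST : 0 < S + T := by
    have := (abs_le.1 hT2).1
    linarith
  -- Conclusion 2
  have hsum2 : (∑ e : E, (c e : ℝ) * (f e + η * Δ e)) = (∑ e : E, (c e:ℝ) * f e) + T := by
    rw [hTdef, ← Finset.sum_add_distrib]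
    exact Finset.sum_congr rfl fun e _ => by ring
  have conc2 : (F:ℝ) < ∑ e : E, (c e : ℝ) * (f e + η * Δ e) := by
    rw [hsum2]
    have := hSdef
    linarith
  -- log bound
  have hlogb : Real.log (S + T) ≤ Real.log S + T / S := by
    have h1 : Real.log ((S+T)/S) ≤ (S+T)/S - 1 :=
      Real.log_le_sub_one_of_pos (div_pos hST hS)
    rw [Real.log_div hST.ne' hS.ne'] at h1
    have h2 : (S+T)/S - 1 = T/S := by field_simp; ring
    linarith [h2 ▸ h1]
  have hlog20 : 20*(m:ℝ) * Real.log (S+T) ≤ 20*(m:ℝ) * Real.log S + 20*(m:ℝ) * S⁻¹ * T := by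
    have h0 : (0:ℝ) ≤ 20*(m:ℝ) := by linarith
    have h1 := mul_le_mul_of_nonneg_left hlogb h0
    have e1 : T / S = S⁻¹ * T := by rw [div_eq_mul_inv]; ring
    rw [e1] at h1
    linarith [h1]
  -- quadratic remainder bound
  have hquad : ∀ x y : ℝ, 0 < x → x ≤ (U:ℝ)+1 → x ^ (-1-α) * |y| ≤ κ'/25 →
      2*α * x ^ (-1-α) * y^2 / x ≤ (4*α*κ'/25) * (x ^ (-1-α) * |y|) := by
    intro x y hx hxU hxy
    have e0 : x ^ α * x ^ (-1-α) = x⁻¹ := by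
      rw [← Real.rpow_add hx, show α + (-1-α) = (-1:ℝ) by ring, Real.rpow_neg_one]
    have e2 : x ^ α ≤ 2 := hpow2 x hx hxU
    have hZ : (0:ℝ) ≤ x ^ (-1-α) * |y| :=
      mul_nonneg (Real.rpow_pos_of_pos hx _).le (abs_nonneg _)
    have hy2 : y^2 = |y| * |y| := by rw [pow_two, ← abs_mul_abs_self]
    have key : 2*α * x ^ (-1-α) * y^2 / x
        = 2*α * ((x ^ (-1-α) * |y|) * (x ^ α * (x ^ (-1-α) * |y|))) := by
      rw [hy2, div_eq_mul_inv, ← e0]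
      ring
    rw [key]
    have hW : x ^ α * (x ^ (-1-α) * |y|) ≤ 2 * (κ'/25) :=
      mul_le_mul e2 hxy hZ (by norm_num)
    have h5 := mul_le_mul_of_nonneg_left hW hZ
    have h6 := mul_le_mul_of_nonneg_left h5 (by positivity : (0:ℝ) ≤ 2*α)
    linarith [h6]
  -- per-edge barrier bound
  have hbar : ∀ e : E, (((u e:ℝ) - (f e + η*Δ e)) ^ (-α) + ((f e + η*Δ e) + δ) ^ (-α))
      ≤ ((((u e:ℝ) - f e) ^ (-α) + (f e + δ) ^ (-α))
        + (α * a e ^ (-1-α) - α * b e ^ (-1-α)) * (η*Δ e))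
        + (4*α*κ'/25) * (ℓf e * |η*Δ e|) := by
    intro e
    have b1 := barrier_step (hapos e) (hha e) hαpos.le hα1
    have hnb : |-(η * Δ e)| ≤ b e / 2 := by rw [abs_neg]; exact hhb e
    have b2 := barrier_step (hbpos e) hnb hαpos.le hα1
    rw [neg_sq] at b2
    have q1 := hquad (a e) (η * Δ e) (hapos e) (haU e) (haK e)
    have q2 := hquad (b e) (η * Δ e) (hbpos e) (hbU e) (hbK e)
    have eℓ : ℓf e * |η*Δ e| = a e ^ (-1-α) * |η*Δ e| + b e ^ (-1-α) * |η*Δ e| := by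
      rw [hℓeq e]; ring
    have ea : (u e:ℝ) - (f e + η*Δ e) = a e - η*Δ e := by rw [haeq]; ring
    have eb : (f e + η*Δ e) + δ = b e - (-(η*Δ e)) := by rw [hbeq]; ring
    have ea' : (u e:ℝ) - f e = a e := (haeq e).symm
    have eb' : f e + δ = b e := (hbeq e).symm
    rw [ea, eb, ea', eb', eℓ]
    linarith [b1, b2, q1, q2]
  -- summed barrier bound
  have hbarsum : (∑ e : E, (((u e:ℝ) - (f e + η*Δ e)) ^ (-α) + ((f e + η*Δ e) + δ) ^ (-α)))
      ≤ (∑ e : E, (((u e:ℝ) - f e) ^ (-α) + (f e + δ) ^ (-α))) + A + κ'^2/400 := by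
    have h1 := Finset.sum_le_sum (fun e (_ : e ∈ Finset.univ) => hbar e)
    have hsplit : (∑ e : E, (((((u e:ℝ) - f e) ^ (-α) + (f e + δ) ^ (-α))
          + (α * a e ^ (-1-α) - α * b e ^ (-1-α)) * (η*Δ e))
          + (4*α*κ'/25) * (ℓf e * |η*Δ e|)))
        = (∑ e : E, (((u e:ℝ) - f e) ^ (-α) + (f e + δ) ^ (-α)))
          + (∑ e : E, (α * a e ^ (-1-α) - α * b e ^ (-1-α)) * (η*Δ e))
          + (∑ e : E, (4*α*κ'/25) * (ℓf e * |η*Δ e|)) := by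
      rw [Finset.sum_add_distrib, Finset.sum_add_distrib]
    have h2 : (∑ e : E, (4*α*κ'/25) * (ℓf e * |η*Δ e|))
        = (4*α*κ'/25) * (∑ e : E, ℓf e * |η*Δ e|) := by
      rw [Finset.mul_sum]
    have h3 : (4*α*κ'/25) * (∑ e : E, ℓf e * |η*Δ e|) ≤ κ'^2/400 := by
      have hc0 : (0:ℝ) ≤ 4*α*κ'/25 := by positivity
      have h4 := mul_le_mul_of_nonneg_left hK hc0
      have h5 := mul_le_mul_of_nonneg_right hα3000
        (mul_nonneg (sq_nonneg κ') (by norm_num : (0:ℝ) ≤ 4/625))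
      have h6 : (0:ℝ) ≤ κ'^2 := sq_nonneg _
      linarith [h4, h5]
    linarith [h1, hsplit, h2, h3, hAdef]
  -- assemble conclusion 3
  refine ⟨feas, conc2, ?_⟩
  have eST : (∑ e : E, (c e : ℝ) * (f e + η * Δ e)) - (F:ℝ) = S + T := by
    rw [hsum2, hSdef]; ring
  rw [eST]
  have final : 20*(m:ℝ) * Real.log (S+T)
      + (∑ e : E, (((u e:ℝ) - (f e + η*Δ e)) ^ (-α) + ((f e + η*Δ e) + δ) ^ (-α)))
      ≤ 20*(m:ℝ) * Real.log S
      + (∑ e : E, (((u e:ℝ) - f e) ^ (-α) + (f e + δ) ^ (-α))) - κ'^2/500 := by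
    have h1 := hlog20
    have h2 := hbarsum
    have h3 := hGfTA
    have h4 := hηGf_ub
    have h5 : (0:ℝ) ≤ κ'^2 := sq_nonneg _
    linarith
  linarith [final]
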